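/- Let b₁, …, b_l ≥ 2 be pairwise coprime and let a_i be coprime to b_i with α_i = a_i/b_i non-integer. If n₁^{α₁}n₂^{α₂}⋯n_l^{α_l} is rational with all n_i positive integers, and n_i is b_i-free for each i, then n_i = 1 for all i. -/

import Mathlib

def IsBFree (b n : ℕ) : Prop := ∀ k : ℕ, 1 < k → ¬ k ^ b ∣ n

theorem stmt17 (l : ℕ) (a b : Fin l → ℕ) (ha : ∀ i, 0 < a i) (hb : ∀ i, 2 ≤ b i)
    (hcop : ∀ i, Nat.Coprime (a i) (b i))
    (hbb : ∀ i j, i ≠ j → Nat.Coprime (b i) (b j))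
    (n : Fin l → ℕ) (hn : ∀ i, 0 < n i) (hnf : ∀ i, IsBFree (b i) (n i))
    (hrat : ∃ q : ℚ, ∏ i, (n i : ℝ) ^ ((a i : ℝ) / (b i : ℝ)) = (q : ℝ)) :
    ∀ i, n i = 1 := by
  classical
  obtain ⟨q, hq⟩ := hrat
  set B : ℕ := ∏ i, b i with hB
  set P : Fin l → ℕ := fun i => ∏ k ∈ Finset.univ.erase i, b k with hP
  have hBP : ∀ i, b i * P i = B := fun i =>
    Finset.mul_prod_erase _ _ (Finset.mem_univ i)
  have hBpos : 0 < B := Finset.prod_pos fun i _ => lt_of_lt_of_le two_pos (hb i)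
  have hq0 : (0:ℝ) < (q:ℝ) := by
    rw [← hq]
    exact Finset.prod_pos fun i _ => Real.rpow_pos_of_pos (by exact_mod_cast hn i) _
  set N : ℕ := ∏ i, n i ^ (a i * P i) with hN
  have key : (q:ℝ) ^ B = (N:ℝ) := by
    rw [← hq, ← Finset.prod_pow, hN]
    push_cast
    refine Finset.prod_congr rfl fun i _ => ?_
    rw [← Real.rpow_natCast ((n i:ℝ) ^ ((a i:ℝ)/(b i:ℝ))) B,
      ← Real.rpow_mul (by positivity), ← Real.rpow_natCast (n i:ℝ) (a i * P i)]
    congr 1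
    have hbne : (b i : ℝ) ≠ 0 := by
      have := hb i; positivity
    rw [← hBP i]
    push_cast
    field_simp
  have keyQ : q ^ B = (N:ℚ) := by exact_mod_cast key
  have hden : q.den = 1 := by
    have h1 : q.den ^ B = 1 := by
      have := congrArg Rat.den keyQ
      rwa [Rat.den_pow, Rat.den_natCast] at this
    exact (pow_eq_one_iff.mp h1).resolve_right hBpos.ne'
  have hqpos : 0 < q := by exact_mod_cast hq0
  set m : ℕ := q.num.toNat with hm
  have hmq : (m : ℚ) = q := by
    have h2 : (q.num : ℚ) = q := (Rat.den_eq_one_iff q).mp hden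
    have h3 : ((q.num.toNat : ℤ) : ℚ) = q := by
      rw [Int.toNat_of_nonneg (Rat.num_pos.mpr hqpos).le]; exact h2
    exact_mod_cast h3
  have hmpos : 0 < m := by
    have : (0:ℚ) < (m:ℚ) := by rw [hmq]; exact hqpos
    exact_mod_cast this
  have keyN : m ^ B = N := by
    have : ((m:ℚ)) ^ B = (N:ℚ) := by rw [hmq]; exact keyQ
    exact_mod_cast this
  -- factorization equation at each prime p
  intro j
  by_contra hj1
  obtain ⟨p, hp, hpd⟩ := Nat.exists_prime_and_dvd hj1
  have fact_eq : B * m.factorization p = ∑ i, (a i * P i) * (n i).factorization p := by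
    have := congrArg (fun x => Nat.factorization x p) keyN
    simp only [Nat.factorization_pow] at this
    rw [hN, Nat.factorization_prod (fun i _ => pow_ne_zero _ (hn i).ne')] at this
    simpa [Nat.factorization_pow, Finsupp.smul_apply, Finsupp.finset_sum_apply] using this
  have hdvd_sum : b j ∣ ∑ i, (a i * P i) * (n i).factorization p := by
    rw [← fact_eq]
    exact Dvd.dvd.mul_right (Finset.dvd_prod_of_mem b (Finset.mem_univ j)) _
  have hdvd_others : ∀ i ∈ Finset.univ.erase j, b j ∣ (a i * P i) * (n i).factorization p := by
    intro i hi
    have hij : i ≠ j := Finset.ne_of_mem_erase hi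
    have : b j ∣ P i := Finset.dvd_prod_of_mem b (Finset.mem_erase.mpr ⟨hij.symm, Finset.mem_univ j⟩)
    exact Dvd.dvd.mul_right (Dvd.dvd.mul_left this _) _
  have hdvd_j : b j ∣ (a j * P j) * (n j).factorization p := by
    have hsplit : ∑ i, (a i * P i) * (n i).factorization p
        = (a j * P j) * (n j).factorization p
          + ∑ i ∈ Finset.univ.erase j, (a i * P i) * (n i).factorization p := by
      exact (Finset.add_sum_erase _ _ (Finset.mem_univ j)).symm
    have h2 : b j ∣ ∑ i ∈ Finset.univ.erase j, (a i * P i) * (n i).factorization p :=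
      Finset.dvd_sum hdvd_others
    have := hdvd_sum
    rw [hsplit] at this
    exact (Nat.dvd_add_right h2).mp (by rwa [Nat.add_comm] at this)
  have hcop_aP : Nat.Coprime (b j) (a j * P j) := by
    refine Nat.Coprime.mul_right (hcop j).symm ?_
    exact Nat.Coprime.prod_right fun k hk =>
      (hbb j k (Finset.ne_of_mem_erase hk).symm)
  have hdvd_e : b j ∣ (n j).factorization p :=
    (Nat.Coprime.dvd_of_dvd_mul_left hcop_aP hdvd_j)
  have he_lt : (n j).factorization p < b j := by
    by_contra hle
    push_neg at hle
    exact hnf j p hp.one_lt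
      (dvd_trans (pow_dvd_pow p hle)
        ((Nat.Prime.pow_dvd_iff_le_factorization hp (hn j).ne').mpr le_rfl))
  have he0 : (n j).factorization p = 0 := Nat.eq_zero_of_dvd_of_lt hdvd_e he_lt
  exact absurd (Nat.Prime.factorization_pos_of_dvd hp (hn j).ne' hpd) (by omega)
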